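/- Let R be a Noetherian ring and F a finite R-module. Then F admits a filtration 0 = F₀ ⊆ F₁ ⊆ ⋯ ⊆ F_n = F such that each quotient F_{i+1}/F_i is isomorphic to a nonzero torsion-free rank-1 module over R/P_i for some prime ideal P_i which is an associated prime of F. -/

import Mathlib

open CategoryTheory IsLocalRing

/-- The length of a module, as the Krull dimension of its lattice of submodules. -/
noncomputable def mlen (R M : Type) [Ring R] [AddCommGroup M] [Module R M] : WithBot ℕ∞ :=
  Order.krullDim (Submodule R M)

/-- `extM R M N n` is `Ext^n_R(M, N)`. -/
noncomputable def extM (R : Type) [CommRing R] (M N : Type)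
    [AddCommGroup M] [Module R M] [AddCommGroup N] [Module R N] (n : ℕ) : ModuleCat R :=
  ((Ext R (ModuleCat R) n).obj (Opposite.op (ModuleCat.of R M))).obj (ModuleCat.of R N)

/-- The length of the localization `M_P` over `R_P`. -/
noncomputable def locLen (R : Type) [CommRing R] (M : Type) [AddCommGroup M] [Module R M]
    (P : PrimeSpectrum R) : WithBot ℕ∞ :=
  mlen (Localization.AtPrime P.asIdeal) (LocalizedModule P.asIdeal.primeCompl M)

section Devissage

variable {R F : Type} [CommRing R] [AddCommGroup F] [Module R F]

/-- The property that `B/A` is a nonzero torsion-free rank-one module over `R/P`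
for some associated prime `P` of `F`. -/
def GoodStep (A B : Submodule R F) : Prop :=
  ∃ P ∈ associatedPrimes R F,
    Nontrivial (B ⧸ (Submodule.comap B.subtype A)) ∧
    (∀ r : R, r ∈ P → ∀ q : B ⧸ (Submodule.comap B.subtype A), r • q = 0) ∧
    (∀ r : R, r ∉ P → ∀ q : B ⧸ (Submodule.comap B.subtype A), r • q = 0 → q = 0) ∧
    (∀ x y : B ⧸ (Submodule.comap B.subtype A),
      ∃ a b : R, a ∉ P ∧ (a • x = b • y ∨ a • y = b • x))

/-- `Reaches A B`: there is a good chain from `A` to `B`. -/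
def Reaches (A B : Submodule R F) : Prop :=
  ∃ (n : ℕ) (c : Fin (n + 1) → Submodule R F), Monotone c ∧ c 0 = A ∧ c (Fin.last n) = B ∧
    ∀ i : Fin n, GoodStep (c i.castSucc) (c i.succ)

lemma reaches_refl (A : Submodule R F) : Reaches A A :=
  ⟨0, fun _ => A, monotone_const, rfl, rfl, fun i => i.elim0⟩

lemma goodStep_of (A B : Submodule R F) (P : Ideal R) (hP : P ∈ associatedPrimes R F)
    (h1 : ∃ x ∈ B, x ∉ A)
    (h2 : ∀ r ∈ P, ∀ y ∈ B, r • y ∈ A)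
    (h3 : ∀ r : R, r ∉ P → ∀ y ∈ B, r • y ∈ A → y ∈ A)
    (h4 : ∀ y ∈ B, ∀ z ∈ B, ∃ a b : R, a ∉ P ∧ (a • y - b • z ∈ A ∨ a • z - b • y ∈ A)) :
    GoodStep A B := by
  classical
  refine ⟨P, hP, ?_, ?_, ?_, ?_⟩
  · obtain ⟨x, hxB, hxA⟩ := h1
    refine ⟨Submodule.Quotient.mk ⟨x, hxB⟩, 0, ?_⟩
    rw [ne_eq, Submodule.Quotient.mk_eq_zero, Submodule.mem_comap]
    exact hxA
  · intro r hr q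
    obtain ⟨y, rfl⟩ := Submodule.Quotient.mk_surjective _ q
    rw [← Submodule.Quotient.mk_smul, Submodule.Quotient.mk_eq_zero, Submodule.mem_comap]
    exact h2 r hr _ y.2
  · intro r hr q hq
    obtain ⟨y, rfl⟩ := Submodule.Quotient.mk_surjective _ q
    rw [← Submodule.Quotient.mk_smul, Submodule.Quotient.mk_eq_zero, Submodule.mem_comap] at hq
    rw [Submodule.Quotient.mk_eq_zero, Submodule.mem_comap]
    exact h3 r hr _ y.2 hq
  · intro x y
    obtain ⟨z, rfl⟩ := Submodule.Quotient.mk_surjective _ x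
    obtain ⟨w, rfl⟩ := Submodule.Quotient.mk_surjective _ y
    obtain ⟨a, b, ha, hab⟩ := h4 z z.2 w w.2
    refine ⟨a, b, ha, ?_⟩
    rcases hab with h | h
    · left
      rw [← Submodule.Quotient.mk_smul, ← Submodule.Quotient.mk_smul, Submodule.Quotient.eq,
        Submodule.mem_comap]
      exact h
    · right
      rw [← Submodule.Quotient.mk_smul, ← Submodule.Quotient.mk_smul, Submodule.Quotient.eq,
        Submodule.mem_comap]
      exact h

lemma reaches_snoc {A C C' : Submodule R F} (h : Reaches A C) (hle : C ≤ C')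
    (hg : GoodStep C C') : Reaches A C' := by
  obtain ⟨n, c, hmono, h0, hlast, hstep⟩ := h
  refine ⟨n + 1, Fin.snoc c C', ?_, ?_, ?_, ?_⟩
  · intro i j hij
    induction j using Fin.lastCases with
    | last =>
      rw [Fin.snoc_last]
      induction i using Fin.lastCases with
      | last => rw [Fin.snoc_last]
      | cast i => rw [Fin.snoc_castSucc]; exact le_trans (hlast ▸ hmono (Fin.le_last i)) hle
    | cast j =>
      induction i using Fin.lastCases with
      | last => exact absurd hij (not_le.mpr (Fin.castSucc_lt_last j))
      | cast i =>
        rw [Fin.snoc_castSucc, Fin.snoc_castSucc]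
        exact hmono (by exact_mod_cast hij)
  · rw [show (0 : Fin (n + 2)) = Fin.castSucc 0 from rfl, Fin.snoc_castSucc]; exact h0
  · rw [Fin.snoc_last]
  · intro i
    induction i using Fin.lastCases with
    | last =>
      rw [Fin.succ_last, Fin.snoc_last, Fin.snoc_castSucc, hlast]
      exact hg
    | cast i =>
      rw [Fin.succ_castSucc, Fin.snoc_castSucc, Fin.snoc_castSucc]
      exact hstep i

/-- Extract an element `x ∉ C` with `P • x ⊆ C`, given that `P ^ k • N ⊆ C`. -/
lemma extract_elem {P : Ideal R} {N C : Submodule R F} {k : ℕ}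
    (hk : ∀ y ∈ N, ∀ p ∈ P ^ k, p • y ∈ C)
    {y₀ : F} (hy₀N : y₀ ∈ N) (hy₀C : y₀ ∉ C) :
    ∃ x, x ∈ N ∧ x ∉ C ∧ ∀ q ∈ P, q • x ∈ C := by
  classical
  have aux : ∀ d j, k ≤ j + d → ∀ p ∈ P ^ j, p • y₀ ∉ C →
      ∃ x, x ∈ N ∧ x ∉ C ∧ ∀ q ∈ P, q • x ∈ C := by
    intro d
    induction d with
    | zero =>
      intro j hj p hp hpC
      exact absurd (hk y₀ hy₀N p (Ideal.pow_le_pow_right (by omega) hp)) hpC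
    | succ d ih =>
      intro j hj p hp hpC
      by_cases hq : ∀ q ∈ P, q • (p • y₀) ∈ C
      · exact ⟨p • y₀, Submodule.smul_mem N p hy₀N, hpC, hq⟩
      · push_neg at hq
        obtain ⟨q, hqP, hqC⟩ := hq
        refine ih (j + 1) (by omega) (p * q) ?_ ?_
        · rw [pow_succ]
          exact Ideal.mul_mem_mul hp hqP
        · rwa [mul_comm, mul_smul]
  refine aux k 0 (by omega) 1 ?_ (by rwa [one_smul])
  rw [pow_zero, Ideal.one_eq_top]; trivial

lemma step_lemma {P : Ideal R} (hPprime : P.IsPrime) (hP : P ∈ associatedPrimes R F)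
    {N T C : Submodule R F} {k : ℕ}
    (hCN : C ≤ N) (hTC : T ≤ C)
    (hk : ∀ y ∈ N, ∀ p ∈ P ^ k, p • y ∈ T)
    (hsat : ∀ y ∈ N, ∀ s : R, s ∉ P → s • y ∈ C → y ∈ C)
    (hne : C ≠ N) :
    ∃ C' : Submodule R F, GoodStep C C' ∧ C < C' ∧ C' ≤ N ∧
      (∀ y ∈ N, ∀ s : R, s ∉ P → s • y ∈ C' → y ∈ C') := by
  classical
  have hmulP : ∀ {s t : R}, s ∉ P → t ∉ P → s * t ∉ P := fun hs ht h =>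
    ((hPprime.mem_or_mem h).elim hs ht)
  have hone : (1 : R) ∉ P := fun h => hPprime.ne_top ((Ideal.eq_top_iff_one _).mpr h)
  -- find y₀ ∈ N \ C
  obtain ⟨y₀, hy₀N, hy₀C⟩ : ∃ y₀, y₀ ∈ N ∧ y₀ ∉ C := by
    by_contra h
    push_neg at h
    exact hne (le_antisymm hCN h)
  obtain ⟨x₀, hx₀N, hx₀C, hx₀P⟩ :=
    extract_elem (fun y hy p hp => hTC (hk y hy p hp)) hy₀N hy₀C
  -- define C'
  set C' : Submodule R F :=
    { carrier := {y | y ∈ N ∧ ∃ s r : R, s ∉ P ∧ s • y - r • x₀ ∈ C}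
      add_mem' := by
        rintro y z ⟨hyN, s, r, hs, hy⟩ ⟨hzN, s', r', hs', hz⟩
        refine ⟨add_mem hyN hzN, s * s', s' * r + s * r', hmulP hs hs', ?_⟩
        have : (s * s') • (y + z) - (s' * r + s * r') • x₀ =
            s' • (s • y - r • x₀) + s • (s' • z - r' • x₀) := by
          simp only [smul_add, smul_sub, smul_smul, add_smul]
          ring_nf
          abel
        rw [this]
        exact add_mem (Submodule.smul_mem C s' hy) (Submodule.smul_mem C s hz)
      zero_mem' := ⟨zero_mem N, 1, 0, hone, by simp⟩
      smul_mem' := by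
        rintro a y ⟨hyN, s, r, hs, hy⟩
        refine ⟨Submodule.smul_mem N a hyN, s, a * r, hs, ?_⟩
        have : s • (a • y) - (a * r) • x₀ = a • (s • y - r • x₀) := by
          simp only [smul_sub, smul_smul, mul_comm]
        rw [this]
        exact Submodule.smul_mem C a hy } with hC'def
  have hmemC' : ∀ y : F, y ∈ C' ↔ y ∈ N ∧ ∃ s r : R, s ∉ P ∧ s • y - r • x₀ ∈ C :=
    fun y => Iff.rfl
  have hCC' : C ≤ C' := fun y hy =>
    ⟨hCN hy, 1, 0, hone, by simpa using hy⟩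
  have hx₀C' : x₀ ∈ C' := ⟨hx₀N, 1, 1, hone, by simp⟩
  have hC'N : C' ≤ N := fun y hy => hy.1
  have hsat' : ∀ y ∈ N, ∀ s : R, s ∉ P → s • y ∈ C' → y ∈ C' := by
    rintro y hyN t ht ⟨-, s, r, hs, hsy⟩
    exact ⟨hyN, s * t, r, hmulP hs ht, by rwa [mul_smul]⟩
  refine ⟨C', ?_, lt_of_le_of_ne hCC' (fun h => hx₀C (h ▸ hx₀C')), hC'N, hsat'⟩
  refine goodStep_of C C' P hP ⟨x₀, hx₀C', hx₀C⟩ ?_ ?_ ?_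
  · -- P kills C'/C
    rintro p hp y ⟨hyN, s, r, hs, hy⟩
    refine hsat (p • y) (Submodule.smul_mem N p hyN) s hs ?_
    have : s • (p • y) = p • (s • y - r • x₀) + r • (p • x₀) := by
      simp only [smul_sub, smul_smul, mul_comm]
      abel
    rw [this]
    exact add_mem (Submodule.smul_mem C p hy) (Submodule.smul_mem C r (hx₀P p hp))
  · -- torsion-free
    intro r hr y hyC' hry
    exact hsat y (hC'N hyC') r hr hry
  · -- rank one
    rintro y ⟨hyN, s, r, hs, hy⟩ z ⟨hzN, s', r', hs', hz⟩
    by_cases hr' : r' ∉ P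
    · refine ⟨r' * s, r * s', hmulP hr' hs, Or.inl ?_⟩
      have : (r' * s) • y - (r * s') • z = r' • (s • y - r • x₀) - r • (s' • z - r' • x₀) := by
        simp only [smul_sub, smul_smul, mul_comm]
        abel
      rw [this]
      exact sub_mem (Submodule.smul_mem C r' hy) (Submodule.smul_mem C r hz)
    · push_neg at hr'
      by_cases hr : r ∉ P
      · refine ⟨r * s', r' * s, hmulP hr hs', Or.inr ?_⟩
        have : (r * s') • z - (r' * s) • y = r • (s' • z - r' • x₀) - r' • (s • y - r • x₀) := by
          simp only [smul_sub, smul_smul, mul_comm]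
          abel
        rw [this]
        exact sub_mem (Submodule.smul_mem C r hz) (Submodule.smul_mem C r' hy)
      · push_neg at hr
        -- both r, r' ∈ P : then s • y ∈ C and s' • z ∈ C, so y, z ∈ C
        have hyC : y ∈ C := by
          refine hsat y hyN s hs ?_
          have := add_mem hy (hx₀P _ hr)
          simpa using this
        refine ⟨1, 0, hone, Or.inl ?_⟩
        simpa using hyC

section NoetherianPhase

variable [IsNoetherianRing R] [Module.Finite R F]

lemma phase_one {N : Submodule R F} (hN : N ≠ ⊥) :
    ∃ P : Ideal R, P.IsPrime ∧ P ∈ associatedPrimes R F ∧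
      ∃ (T : Submodule R F) (k : ℕ), T ≤ N ∧
        N.annihilator.radical < T.annihilator.radical ∧
        (∀ y ∈ N, ∀ s : R, s ∉ P → s • y ∈ T → y ∈ T) ∧
        (∀ y ∈ N, ∀ p ∈ P ^ k, p • y ∈ T) := by
  classical
  haveI : IsNoetherian R F := isNoetherian_of_isNoetherianRing_of_finite R F
  set J : Ideal R := N.annihilator with hJdef
  have hJtop : J ≠ ⊤ := by
    obtain ⟨x, hxN, hx0⟩ := Submodule.exists_mem_ne_zero_of_ne_bot hN
    intro h
    have h1 : (1 : R) ∈ N.annihilator := (Ideal.eq_top_iff_one J).mp h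
    have h2 := Submodule.mem_annihilator.mp h1 x hxN
    rw [one_smul] at h2
    exact hx0 h2
  obtain ⟨Mx, hMx, hJMx⟩ := Ideal.exists_le_maximal J hJtop
  haveI : Mx.IsPrime := hMx.isPrime
  obtain ⟨P, hPmin, -⟩ := Ideal.exists_minimalPrimes_le hJMx
  have hPp : P.IsPrime := hPmin.1.1
  have hJP : J ≤ P := hPmin.1.2
  have hone : (1 : R) ∉ P := fun h => hPp.ne_top ((Ideal.eq_top_iff_one _).mpr h)
  have hmulP : ∀ {s t : R}, s ∉ P → t ∉ P → s * t ∉ P := fun hs ht h =>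
    ((hPp.mem_or_mem h).elim hs ht)
  -- the torsion submodule T
  set T : Submodule R F :=
    { carrier := {y | y ∈ N ∧ ∃ s : R, s ∉ P ∧ s • y = 0}
      add_mem' := by
        rintro y z ⟨hyN, s, hs, hy⟩ ⟨hzN, s', hs', hz⟩
        refine ⟨add_mem hyN hzN, s * s', hmulP hs hs', ?_⟩
        have h1 : (s * s') • y = 0 := by rw [mul_comm, mul_smul, hy, smul_zero]
        have h2 : (s * s') • z = 0 := by rw [mul_smul, hz, smul_zero]
        rw [smul_add, h1, h2, add_zero]
      zero_mem' := ⟨zero_mem N, 1, hone, smul_zero 1⟩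
      smul_mem' := by
        rintro a y ⟨hyN, s, hs, hy⟩
        exact ⟨Submodule.smul_mem N a hyN, s, hs, by
          rw [smul_comm, hy, smul_zero]⟩ } with hTdef
  have hmemT : ∀ y : F, y ∈ T ↔ y ∈ N ∧ ∃ s : R, s ∉ P ∧ s • y = 0 := fun y => Iff.rfl
  have hTN : T ≤ N := fun y hy => hy.1
  have hsatT : ∀ y ∈ N, ∀ s : R, s ∉ P → s • y ∈ T → y ∈ T := by
    rintro y hyN t ht ⟨-, s, hs, hsy⟩
    exact ⟨hyN, s * t, hmulP hs ht, by rwa [mul_smul]⟩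
  -- the saturation ideal I
  set I : Ideal R :=
    { carrier := {r | ∃ s : R, s ∉ P ∧ s * r ∈ J}
      add_mem' := by
        rintro r r' ⟨s, hs, hr⟩ ⟨s', hs', hr'⟩
        refine ⟨s * s', hmulP hs hs', ?_⟩
        have : s * s' * (r + r') = s' * (s * r) + s * (s' * r') := by ring
        rw [this]
        exact add_mem (J.mul_mem_left s' hr) (J.mul_mem_left s hr')
      zero_mem' := ⟨1, hone, by simpa using zero_mem J⟩
      smul_mem' := by
        rintro a r ⟨s, hs, hr⟩
        refine ⟨s, hs, ?_⟩
        have : s * (a • r) = a * (s * r) := by simp [smul_eq_mul]; ring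
        rw [this]
        exact J.mul_mem_left a hr } with hIdef
  have hmemI : ∀ r : R, r ∈ I ↔ ∃ s : R, s ∉ P ∧ s * r ∈ J := fun r => Iff.rfl
  have hJI : J ≤ I := fun r hr => ⟨1, hone, by rwa [one_mul]⟩
  have hIP : I ≤ P := by
    rintro r ⟨s, hs, hr⟩
    exact ((hPp.mem_or_mem (hJP hr)).elim (fun h => absurd h hs) id)
  -- P is the radical of I
  have hPradI : P ≤ I.radical := by
    intro p hp
    by_contra hpI
    set U : Submonoid R :=
      { carrier := {u | ∃ s : R, s ∉ P ∧ ∃ n : ℕ, u = s * p ^ n}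
        one_mem' := ⟨1, hone, 0, by ring⟩
        mul_mem' := by
          rintro u v ⟨s, hs, n, rfl⟩ ⟨s', hs', n', rfl⟩
          exact ⟨s * s', hmulP hs hs', n + n', by ring⟩ } with hUdef
    have hdisj : Disjoint (I : Set R) (U : Set R) := by
      rw [Set.disjoint_left]
      rintro u huI ⟨s, hs, n, rfl⟩
      obtain ⟨t, ht, htu⟩ := huI
      refine hpI (Ideal.mem_radical_iff.mpr ⟨n, ⟨t * s, hmulP ht hs, by rwa [mul_assoc]⟩⟩)
    obtain ⟨Q, hQprime, hIQ, hQdisj⟩ := Ideal.exists_le_prime_disjoint I U hdisj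
    have hQP : Q ≤ P := by
      intro t htQ
      by_contra htP
      exact Set.disjoint_left.mp hQdisj htQ ⟨t, htP, 0, by ring⟩
    have hPQ : P ≤ Q := hPmin.2 ⟨hQprime, le_trans hJI hIQ⟩ hQP
    exact Set.disjoint_left.mp hQdisj (hPQ hp) ⟨1, hone, 1, by ring⟩
  have hradeq : I.radical = P :=
    le_antisymm (hPp.radical ▸ Ideal.radical_mono hIP) hPradI
  -- P ^ k ≤ I
  obtain ⟨k, hkI⟩ := Ideal.exists_radical_pow_le_of_fg I (hradeq ▸ IsNoetherian.noetherian P)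
  rw [hradeq] at hkI
  have hk : ∀ y ∈ N, ∀ p ∈ P ^ k, p • y ∈ T := by
    intro y hy p hp
    obtain ⟨s, hs, hsp⟩ := hkI hp
    refine ⟨Submodule.smul_mem N p hy, s, hs, ?_⟩
    rw [← mul_smul]
    exact Submodule.mem_annihilator.mp hsp y hy
  -- the uniform killer s₀ of T
  obtain ⟨G, hG⟩ := (IsNoetherian.noetherian T : T.FG)
  have hkill : ∀ g ∈ G, ∃ s : R, s ∉ P ∧ s • g = 0 := by
    intro g hg
    have : g ∈ T := hG ▸ Submodule.subset_span hg
    exact this.2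
  choose f hf1 hf2 using hkill
  set s₀ : R := ∏ g ∈ G.attach, f g g.2 with hs₀def
  have hs₀P : s₀ ∉ P := Submonoid.prod_mem P.primeCompl fun g _ => hf1 g g.2
  have hs₀T : s₀ ∈ T.annihilator := by
    rw [Submodule.mem_annihilator]
    intro y hy
    rw [← hG] at hy
    induction hy using Submodule.span_induction with
    | mem g hg =>
      have hgG : g ∈ G := hg
      have hsp : s₀ = (∏ g' ∈ G.attach.erase ⟨g, hgG⟩, f g' g'.2) * f g hgG := by
        rw [hs₀def, ← Finset.prod_erase_mul _ _ (Finset.mem_attach _ ⟨g, hgG⟩)]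
      rw [hsp, mul_smul, hf2 g hgG, smul_zero]
    | zero => rw [smul_zero]
    | add y z _ _ hy hz => rw [smul_add, hy, hz, add_zero]
    | smul a y _ hy => rw [smul_comm, hy, smul_zero]
  have hmeasure : N.annihilator.radical < T.annihilator.radical := by
    refine lt_of_le_of_ne (Ideal.radical_mono fun r hr => ?_) (fun h => ?_)
    · exact Submodule.mem_annihilator.mpr fun y hy =>
        Submodule.mem_annihilator.mp hr y (hTN hy)
    · have : s₀ ∈ N.annihilator.radical := h ▸ Ideal.le_radical hs₀T
      obtain ⟨m, hm⟩ := Ideal.mem_radical_iff.mp this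
      exact hs₀P (hPp.mem_of_pow_mem m (hJP hm))
  -- P is an associated prime of F
  have hPass : P ∈ associatedPrimes R F := by
    have hNT : ¬N ≤ T := by
      intro h
      have : s₀ ∈ J := Submodule.mem_annihilator.mpr fun y hy =>
        Submodule.mem_annihilator.mp hs₀T y (h hy)
      exact hs₀P (hJP this)
    obtain ⟨y₀, hy₀N, hy₀T⟩ := SetLike.not_le_iff_exists.mp hNT
    obtain ⟨x₁, hx₁N, hx₁T, hx₁P⟩ := extract_elem hk hy₀N hy₀T
    obtain ⟨Gp, hGp⟩ := (IsNoetherian.noetherian P : P.FG)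
    have hkill' : ∀ p ∈ Gp, ∃ s : R, s ∉ P ∧ s • (p • x₁) = 0 := by
      intro p hp
      have : p • x₁ ∈ T := hx₁P p (hGp ▸ Ideal.subset_span hp)
      exact this.2
    choose f' hf1' hf2' using hkill'
    set s₁ : R := ∏ p ∈ Gp.attach, f' p p.2 with hs₁def
    have hs₁P : s₁ ∉ P := Submonoid.prod_mem P.primeCompl fun p _ => hf1' p p.2
    set x : F := s₁ • x₁ with hxdef
    refine ⟨hPp, x, le_antisymm ?_ ?_⟩
    · intro p hp
      rw [← hGp] at hp
      apply Ideal.le_radical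
      rw [Submodule.mem_colon_singleton, Submodule.mem_bot]
      induction hp using Submodule.span_induction with
      | mem p hpG =>
        have hpGp : p ∈ Gp := hpG
        have hsplit : s₁ = (∏ p' ∈ Gp.attach.erase ⟨p, hpGp⟩, f' p' p'.2) * f' p hpGp := by
          rw [hs₁def, ← Finset.prod_erase_mul _ _ (Finset.mem_attach _ ⟨p, hpGp⟩)]
        have hx : p • x =
            (∏ p' ∈ Gp.attach.erase ⟨p, hpGp⟩, f' p' p'.2) • (f' p hpGp • (p • x₁)) := by
          rw [hxdef, hsplit, smul_smul, smul_smul, smul_smul, mul_comm, mul_assoc]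
        rw [hx, hf2' p hpGp, smul_zero]
      | zero => rw [zero_smul]
      | add p q _ _ hp hq => rw [add_smul, hp, hq, add_zero]
      | smul a p _ hp => rw [smul_eq_mul, mul_smul, hp, smul_zero]
    · intro r hr
      obtain ⟨m, hr⟩ := Ideal.mem_radical_iff.mp hr
      rw [Submodule.mem_colon_singleton, Submodule.mem_bot] at hr
      refine hPp.mem_of_pow_mem m ?_
      by_contra hrP
      refine hx₁T (hsatT x₁ hx₁N (r ^ m * s₁) (hmulP hrP hs₁P) ?_)
      refine ⟨Submodule.smul_mem N _ hx₁N, 1, hone, ?_⟩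
      rw [one_smul, mul_smul]
      exact hr
  exact ⟨P, hPp, hPass, T, k, hTN, hmeasure, hsatT, hk⟩

lemma phase_two {P : Ideal R} (hPp : P.IsPrime) (hPass : P ∈ associatedPrimes R F)
    {N T : Submodule R F} {k : ℕ} (hTN : T ≤ N)
    (hsatT : ∀ y ∈ N, ∀ s : R, s ∉ P → s • y ∈ T → y ∈ T)
    (hk : ∀ y ∈ N, ∀ p ∈ P ^ k, p • y ∈ T)
    (hT : Reaches ⊥ T) : Reaches ⊥ N := by
  haveI : IsNoetherian R F := isNoetherian_of_isNoetherianRing_of_finite R F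
  set S : Set (Submodule R F) :=
    {C | T ≤ C ∧ C ≤ N ∧ (∀ y ∈ N, ∀ s : R, s ∉ P → s • y ∈ C → y ∈ C) ∧ Reaches ⊥ C} with hS
  have hSne : S.Nonempty := ⟨T, le_refl T, hTN, hsatT, hT⟩
  obtain ⟨C, hCS, hmax⟩ := set_has_maximal_iff_noetherian.mpr ‹IsNoetherian R F› S hSne
  by_cases hCN : C = N
  · exact hCN ▸ hCS.2.2.2
  · obtain ⟨C', hgood, hlt, hC'N, hsat'⟩ :=
      step_lemma hPp hPass hCS.2.1 hCS.1 hk hCS.2.2.1 hCN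
    exact absurd hlt (hmax C' ⟨le_trans hCS.1 hlt.le, hC'N, hsat',
      reaches_snoc hCS.2.2.2 hlt.le hgood⟩)

lemma reaches_bot (N : Submodule R F) : Reaches ⊥ N := by
  have wf : WellFounded ((· > ·) : Ideal R → Ideal R → Prop) :=
    (inferInstance : WellFoundedGT (Submodule R R)).wf
  have H : ∀ A : Ideal R, ∀ N : Submodule R F, N.annihilator.radical = A → Reaches ⊥ N := by
    intro A
    refine wf.induction
      (C := fun A => ∀ N : Submodule R F, N.annihilator.radical = A → Reaches ⊥ N) A ?_
    rintro B IH N hrad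
    by_cases hN : N = ⊥
    · subst hN; exact reaches_refl ⊥
    · obtain ⟨P, hPp, hPass, T, k, hTN, hmeas, hsatT, hk⟩ := phase_one hN
      exact phase_two hPp hPass hTN hsatT hk
        (IH T.annihilator.radical (hrad ▸ hmeas) T rfl)
  exact H _ N rfl

end NoetherianPhase

end Devissage

/-- **Dévissage.** A finite module over a Noetherian ring has a filtration whose successive
quotients are nonzero torsion-free rank-1 modules over `R/P` for associated primes `P` of `F`. -/
theorem devissage (R : Type) [CommRing R] [IsNoetherianRing R]
    (F : Type) [AddCommGroup F] [Module R F] [Module.Finite R F] :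
    ∃ (n : ℕ) (c : Fin (n + 1) → Submodule R F), Monotone c ∧ c 0 = ⊥ ∧ c (Fin.last n) = ⊤ ∧
      ∀ i : Fin n, ∃ P ∈ associatedPrimes R F,
        let Q := (c i.succ) ⧸ (Submodule.comap (c i.succ).subtype (c i.castSucc))
        -- the quotient is a nonzero, torsion-free, rank-1 module over `R/P`:
        Nontrivial Q ∧
        (∀ r : R, r ∈ P → ∀ q : Q, r • q = 0) ∧
        (∀ r : R, r ∉ P → ∀ q : Q, r • q = 0 → q = 0) ∧
        (∀ x y : Q, ∃ a b : R, a ∉ P ∧ (a • x = b • y ∨ a • y = b • x)) := by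
  obtain ⟨n, c, hmono, h0, hlast, hstep⟩ := reaches_bot (R := R) (F := F) ⊤
  exact ⟨n, c, hmono, h0, hlast, fun i => hstep i⟩
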